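/- arXiv:1105.5341 — 3 statements merged into one kernel-verified Lean document; each statement's English description precedes it below -/
import Mathlib

section
/- Let X be a finite indecomposable quandle, let x₀ ∈ X, let G = Inn(X) be the inner group of X, let H = Stab_G(x₀) = {g ∈ G | g(x₀) = x₀} be the stabilizer of x₀, and let z = φ_{x₀} be the left translation by x₀. Then z ∈ H and z is a central element of H, i.e. z·h = h·z for all h ∈ H. -/
open Quandles

/-- The inner group of a rack: the subgroup of the permutation group of `X`
generated by the left-translation permutations `φᵢ = Rack.act' i`. -/
def innerGroup (X : Type*) [Rack X] : Subgroup (Equiv.Perm X) :=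
  Subgroup.closure (Set.range fun i : X => Rack.act' i)

lemma inner_conj {X : Type*} [Rack X] {g : Equiv.Perm X} (hg : g ∈ innerGroup X) :
    ∀ j : X, g * Rack.act' j * g⁻¹ = Rack.act' (g j) := by
  induction hg using Subgroup.closure_induction with
  | mem x hx =>
    obtain ⟨i, rfl⟩ := hx
    intro j
    rw [← Rack.ad_conj i j]
    rfl
  | one => intro j; simp
  | mul a b _ _ ha hb =>
    intro j
    have := ha (b j)
    rw [← hb j] at this
    simpa [mul_assoc] using this
  | inv a _ ha =>
    intro j
    have := ha (a⁻¹ j)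
    rw [show a (a⁻¹ j) = j from a.apply_symm_apply j] at this
    rw [← this]
    group

/-- Let `X` be a finite indecomposable quandle, `x₀ ∈ X`, `G = Inn(X)`,
`H = Stab_G(x₀)` and `z = φ_{x₀}`.  Then `z ∈ H` (i.e. `z` belongs to the inner
group and fixes `x₀`) and `z` is central in `H`. -/
theorem stmt0 {X : Type*} [Fintype X] [Quandle X]
    (hconn : ∀ x y : X, ∃ g ∈ innerGroup X, g x = y) (x₀ : X) :
    (Rack.act' x₀ ∈ innerGroup X ∧ Rack.act' x₀ x₀ = x₀) ∧
      ∀ h : Equiv.Perm X, h ∈ innerGroup X → h x₀ = x₀ →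
        Rack.act' x₀ * h = h * Rack.act' x₀ := by
  refine ⟨⟨Subgroup.subset_closure ⟨x₀, rfl⟩, by simp [Rack.act'_apply]⟩, ?_⟩
  intro h hh hfix
  have := inner_conj hh x₀
  rw [hfix] at this
  calc Rack.act' x₀ * h = (h * Rack.act' x₀ * h⁻¹) * h := by rw [this]
    _ = h * Rack.act' x₀ := by group
end

section
/- Let X be a finite indecomposable quandle, let x₀ ∈ X, let G = Inn(X), and let z = φ_{x₀}. Define a binary operation on G by x ▷ y = x·z·x⁻¹·y·z⁻¹ (that is, x ▷ y = x·I_z(x⁻¹y) where I_z is conjugation by z). Then (G, ▷) is a quandle and the evaluation map e : G → X, g ↦ g(x₀), is a surjective morphism of quandles, i.e. e(x ▷ y) = e(x) ▷ e(y) for all x, y ∈ G. -/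
open Quandles


lemma innerGroup_aut {X : Type*} [Rack X] {g : Equiv.Perm X}
    (hg : g ∈ innerGroup X) : ∀ a b : X, g (a ◃ b) = g a ◃ g b := by
  induction hg using Subgroup.closure_induction with
  | mem x hx =>
    obtain ⟨i, rfl⟩ := hx
    intro a b
    exact (Rack.self_distrib (x := i) (y := a) (z := b))
  | one => intro a b; rfl
  | mul x y hx hy ihx ihy =>
    intro a b
    simp [Equiv.Perm.mul_apply, ihy, ihx]
  | inv x hx ih =>
    intro a b
    apply x.injective
    simp [ih]


/-- Let `X` be a finite indecomposable quandle, `x₀ ∈ X`, `G = Inn(X)` and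
`z = φ_{x₀}` (as an element of `G`).  Equip `G` with the binary operation
`x ▷ y = x·z·x⁻¹·y·z⁻¹`.  Then `(G, ▷)` is a quandle, and the evaluation map
`e : G → X`, `g ↦ g(x₀)`, is a surjective quandle morphism. -/
theorem stmt1 {X : Type*} [Fintype X] [Quandle X]
    (hconn : ∀ x y : X, ∃ g ∈ innerGroup X, g x = y) (x₀ : X)
    (z : innerGroup X) (hz : (z : Equiv.Perm X) = Rack.act' x₀) :
    let op : innerGroup X → innerGroup X → innerGroup X :=
      fun x y => x * z * x⁻¹ * y * z⁻¹
    let e : innerGroup X → X := fun g => (g : Equiv.Perm X) x₀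
    (∀ x, Function.Bijective (op x)) ∧
      (∀ x y w, op x (op y w) = op (op x y) (op x w)) ∧
      (∀ x, op x x = x) ∧
      Function.Surjective e ∧
      (∀ x y, e (op x y) = e x ◃ e y) := by
  intro op e
  refine ⟨?_, ?_, ?_, ?_, ?_⟩
  · intro x
    constructor
    · intro a b h
      exact mul_left_cancel (mul_right_cancel h)
    · intro w
      exact ⟨(x * z * x⁻¹)⁻¹ * w * z, by simp only [op]; group⟩
  · intro x y w
    simp only [op]
    group
  · intro x
    simp only [op]
    group
  · intro y
    obtain ⟨g, hg, hgy⟩ := hconn x₀ y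
    exact ⟨⟨g, hg⟩, hgy⟩
  · intro x y
    have hx := innerGroup_aut x.2
    have hz' : ((z⁻¹ : innerGroup X) : Equiv.Perm X) x₀ = x₀ := by
      apply (z : Equiv.Perm X).injective
      show (z : Equiv.Perm X) ((z : Equiv.Perm X)⁻¹ x₀) = (z : Equiv.Perm X) x₀
      rw [← Equiv.Perm.mul_apply, mul_inv_cancel, Equiv.Perm.one_apply, hz, Rack.act'_apply, Quandle.fix]
    show ((x * z * x⁻¹ * y * z⁻¹ : innerGroup X) : Equiv.Perm X) x₀ = _
    simp only [Subgroup.coe_mul, Equiv.Perm.mul_apply, hz']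
    rw [hz, Rack.act'_apply, hx]
    congr 1
    have : ((x⁻¹ : innerGroup X) : Equiv.Perm X) = (x : Equiv.Perm X)⁻¹ := rfl
    rw [this]
    exact Equiv.Perm.eq_inv_iff_eq.mp rfl
end

section
/- Let T be the tetrahedron quandle, i.e. the conjugacy class of the 3-cycle (1 2 3) in A₄ with x ▷ y = x·y·x⁻¹. Every permutation φ_x of T has order 3, and the finite enveloping group of T, namely the quotient of the enveloping group G_T = F(T)/⟨x·y·x⁻¹ = x ▷ y⟩ by the normal subgroup generated by the elements x³ for x ∈ T, is isomorphic to SL(2, 3), the special linear group of 2×2 matrices over the field with three elements. -/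
open Quandles

/-- The alternating group `A₄` on four letters. -/
def A4 : Subgroup (Equiv.Perm (Fin 4)) := alternatingGroup (Fin 4)

/-- The 3-cycle `(1 2 3)` as an element of `A₄`. -/
def c123 : A4 :=
  ⟨c[(0 : Fin 4), 1, 2], by
    show _ ∈ alternatingGroup (Fin 4); rw [Equiv.Perm.mem_alternatingGroup]; decide⟩

/-- The tetrahedron quandle: the conjugacy class of `(1 2 3)` in `A₄`. -/
def T : Set A4 := {x | ∃ h : A4, h * c123 * h⁻¹ = x}

lemma conj_mem_T (h : A4) {x : A4} (hx : x ∈ T) : h * x * h⁻¹ ∈ T := by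
  obtain ⟨k, rfl⟩ := hx
  exact ⟨h * k, by group⟩

/-- The conjugation quandle structure on the tetrahedron quandle `T`:
`x ▷ y = x·y·x⁻¹`. -/
instance : Quandle T where
  act x y := ⟨x * y * (x : A4)⁻¹, conj_mem_T x y.2⟩
  self_distrib := by
    rintro ⟨x, _⟩ ⟨y, _⟩ ⟨z, _⟩
    apply Subtype.ext
    show x * (y * z * y⁻¹) * x⁻¹ =
      (x * y * x⁻¹) * (x * z * x⁻¹) * (x * y * x⁻¹)⁻¹
    group
  invAct x y := ⟨(x : A4)⁻¹ * y * x, by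
    simpa using conj_mem_T (x : A4)⁻¹ y.2⟩
  left_inv := by
    rintro ⟨x, _⟩ ⟨y, _⟩
    apply Subtype.ext
    show x⁻¹ * (x * y * x⁻¹) * x = y
    group
  right_inv := by
    rintro ⟨x, _⟩ ⟨y, _⟩
    apply Subtype.ext
    show x * (x⁻¹ * y * x) * x⁻¹ = y
    group
  fix := by
    rintro ⟨x, _⟩
    apply Subtype.ext
    show x * x * x⁻¹ = x
    group

namespace Stmt11Aux

/-! ### Decidability instances and explicit elements -/

instance decAlt : DecidablePred (· ∈ alternatingGroup (Fin 4)) := fun _ =>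
  decidable_of_iff _ (Equiv.Perm.mem_alternatingGroup).symm

instance decA4 : DecidablePred (· ∈ A4) := fun _ =>
  decidable_of_iff _ (Equiv.Perm.mem_alternatingGroup).symm

instance decT : DecidablePred (· ∈ T) := fun x =>
  decidable_of_iff (∃ h : A4, h * c123 * h⁻¹ = x) Iff.rfl

instance : DecidableEq (Matrix (Fin 2) (Fin 2) (ZMod 3)) := fun x y =>
  @decidable_of_iff _ _ Matrix.ext_iff (@Fintype.decidableForallFintype (Fin 2) _
    (fun i => @Fintype.decidableForallFintype (Fin 2) _
      (fun j => ZMod.decidableEq 3 (x i j) (y i j)) _) _)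

abbrev SL := Matrix.SpecialLinearGroup (Fin 2) (ZMod 3)

instance : DecidableEq SL := Subtype.instDecidableEq

def va : A4 := c123
def vb : A4 := ⟨c[(1 : Fin 4), 3, 2], by
  show _ ∈ alternatingGroup (Fin 4); rw [Equiv.Perm.mem_alternatingGroup]; decide⟩
def vc : A4 := ⟨c[(0 : Fin 4), 2, 3], by
  show _ ∈ alternatingGroup (Fin 4); rw [Equiv.Perm.mem_alternatingGroup]; decide⟩
def vd : A4 := ⟨c[(0 : Fin 4), 3, 1], by
  show _ ∈ alternatingGroup (Fin 4); rw [Equiv.Perm.mem_alternatingGroup]; decide⟩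
def wb : A4 := ⟨c[(0 : Fin 4), 1, 3], by
  show _ ∈ alternatingGroup (Fin 4); rw [Equiv.Perm.mem_alternatingGroup]; decide⟩
def wc : A4 := ⟨c[(1 : Fin 4), 2, 3], by
  show _ ∈ alternatingGroup (Fin 4); rw [Equiv.Perm.mem_alternatingGroup]; decide⟩

def ta : T := ⟨va, ⟨1, by decide⟩⟩
def tb : T := ⟨vb, ⟨wb, by decide⟩⟩
def tc : T := ⟨vc, ⟨wc, by decide⟩⟩
def td : T := ⟨vd, ⟨vb, by decide⟩⟩

lemma T_classify : ∀ x : T, x = ta ∨ x = tb ∨ x = tc ∨ x = td := by decide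

/-! ### The quotient group -/

def NT : Subgroup (Rack.EnvelGroup T) := Subgroup.normalClosure
  {w : Rack.EnvelGroup T | ∃ x : T, w = (Rack.toEnvelGroup T x) ^ 3}

instance : NT.Normal := by unfold NT; infer_instance

abbrev QT := Rack.EnvelGroup T ⧸ NT

def π : Rack.EnvelGroup T →* QT := QuotientGroup.mk' NT

def eT (x : T) : Rack.EnvelGroup T := Rack.toEnvelGroup T x

lemma rel_env (x y : T) : eT x * eT y = eT (x ◃ y) * eT x := by
  have h : eT (x ◃ y) = eT x * eT y * (eT x)⁻¹ :=
    ShelfHom.map_act (Rack.toEnvelGroup T) (x := x) (y := y)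
  rw [h]; group

lemma relQ (x y : T) : π (eT x) * π (eT y) = π (eT (x ◃ y)) * π (eT x) := by
  rw [← map_mul, ← map_mul, rel_env]

lemma cubeQ (x : T) : π (eT x) ^ 3 = 1 := by
  rw [← map_pow]
  refine (QuotientGroup.eq_one_iff _).2 ?_
  exact Subgroup.subset_normalClosure ⟨x, rfl⟩

def Aq : QT := π (eT ta)
def Bq : QT := π (eT tb)
def Cq : QT := π (eT tc)
def Dq : QT := π (eT td)

lemma rel_ab : Aq * Bq = Cq * Aq := by
  have h := relQ ta tb; rwa [show ta ◃ tb = tc by decide] at h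
lemma rel_ac : Aq * Cq = Dq * Aq := by
  have h := relQ ta tc; rwa [show ta ◃ tc = td by decide] at h
lemma rel_ad : Aq * Dq = Bq * Aq := by
  have h := relQ ta td; rwa [show ta ◃ td = tb by decide] at h
lemma rel_ba : Bq * Aq = Dq * Bq := by
  have h := relQ tb ta; rwa [show tb ◃ ta = td by decide] at h
lemma rel_bc : Bq * Cq = Aq * Bq := by
  have h := relQ tb tc; rwa [show tb ◃ tc = ta by decide] at h
lemma rel_bd : Bq * Dq = Cq * Bq := by
  have h := relQ tb td; rwa [show tb ◃ td = tc by decide] at h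
lemma rel_ca : Cq * Aq = Bq * Cq := by
  have h := relQ tc ta; rwa [show tc ◃ ta = tb by decide] at h
lemma rel_cd : Cq * Dq = Aq * Cq := by
  have h := relQ tc td; rwa [show tc ◃ td = ta by decide] at h

lemma cubeA : Aq * (Aq * Aq) = 1 := by
  have h := cubeQ ta; rwa [pow_succ, pow_succ, pow_one, mul_assoc] at h
lemma cubeB : Bq * (Bq * Bq) = 1 := by
  have h := cubeQ tb; rwa [pow_succ, pow_succ, pow_one, mul_assoc] at h
lemma cubeC : Cq * (Cq * Cq) = 1 := by
  have h := cubeQ tc; rwa [pow_succ, pow_succ, pow_one, mul_assoc] at h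

lemma hAinv : Aq⁻¹ = Aq * Aq := inv_eq_of_mul_eq_one_right cubeA
lemma hBinv : Bq⁻¹ = Bq * Bq := inv_eq_of_mul_eq_one_right cubeB

lemma hA2 : Aq⁻¹ * Aq⁻¹ = Aq := by
  calc Aq⁻¹ * Aq⁻¹ = Aq * (Aq * Aq) * (Aq⁻¹ * Aq⁻¹) := by rw [cubeA]; group
  _ = Aq := by group

lemma conj_ab : Aq * Bq * Aq⁻¹ = Cq := by rw [rel_ab]; group
lemma conj_ac : Aq * Cq * Aq⁻¹ = Dq := by rw [rel_ac]; group
lemma conj_ba : Bq * Aq * Bq⁻¹ = Dq := by rw [rel_ba]; group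
lemma iconj_ab : Aq⁻¹ * Bq * Aq = Dq := by rw [mul_assoc, ← rel_ad]; group
lemma iconj_ac : Aq⁻¹ * Cq * Aq = Bq := by rw [mul_assoc, ← rel_ab]; group


/-! ### The quaternion elements and derived relations -/

def iQ : QT := Bq * Aq⁻¹
def jQ : QT := Cq * Aq⁻¹

lemma HB : Bq = iQ * Aq := by show Bq = Bq * Aq⁻¹ * Aq; group

lemma hD : Dq = Cq * Aq⁻¹ * Bq := by
  calc Dq = Aq * Cq * Aq⁻¹ := conj_ac.symm
  _ = Cq * Dq * Aq⁻¹ := by rw [← rel_cd]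
  _ = Cq * (Aq⁻¹ * Bq * Aq) * Aq⁻¹ := by rw [iconj_ab]
  _ = Cq * Aq⁻¹ * Bq := by group

lemma H4 : Aq * iQ = jQ * Aq := by
  show Aq * (Bq * Aq⁻¹) = Cq * Aq⁻¹ * Aq
  calc Aq * (Bq * Aq⁻¹) = Aq * Bq * Aq⁻¹ := by group
  _ = Cq := conj_ab
  _ = Cq * Aq⁻¹ * Aq := by group

lemma H5 : Aq * jQ = jQ * (iQ * Aq) := by
  show Aq * (Cq * Aq⁻¹) = Cq * Aq⁻¹ * (Bq * Aq⁻¹ * Aq)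
  calc Aq * (Cq * Aq⁻¹) = Aq * Cq * Aq⁻¹ := by group
  _ = Dq := conj_ac
  _ = Cq * Aq⁻¹ * Bq := hD
  _ = Cq * Aq⁻¹ * (Bq * Aq⁻¹ * Aq) := by group

lemma hii : iQ * iQ = Cq * (Bq * Aq) := by
  show Bq * Aq⁻¹ * (Bq * Aq⁻¹) = Cq * (Bq * Aq)
  calc Bq * Aq⁻¹ * (Bq * Aq⁻¹)
      = Bq * (Aq⁻¹ * Bq * Aq) * (Aq⁻¹ * Aq⁻¹) := by group
  _ = Bq * Dq * Aq := by rw [iconj_ab, hA2]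
  _ = Cq * Bq * Aq := by rw [rel_bd]
  _ = Cq * (Bq * Aq) := by group

lemma hjj : jQ * jQ = Cq * (Bq * Aq) := by
  show Cq * Aq⁻¹ * (Cq * Aq⁻¹) = Cq * (Bq * Aq)
  calc Cq * Aq⁻¹ * (Cq * Aq⁻¹)
      = Cq * (Aq⁻¹ * Cq * Aq) * (Aq⁻¹ * Aq⁻¹) := by group
  _ = Cq * Bq * Aq := by rw [iconj_ac, hA2]
  _ = Cq * (Bq * Aq) := by group

lemma H2 : jQ * jQ = iQ * iQ := by rw [hii, hjj]

lemma hz2 : (Cq * (Bq * Aq)) * (Cq * (Bq * Aq)) = 1 := by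
  calc (Cq * (Bq * Aq)) * (Cq * (Bq * Aq))
      = Cq * Bq * (Aq * Cq) * (Bq * Aq) := by group
  _ = Cq * Bq * (Dq * Aq) * (Bq * Aq) := by rw [rel_ac]
  _ = Cq * Bq * Dq * (Aq * Bq) * Aq := by group
  _ = Cq * Bq * Dq * (Cq * Aq) * Aq := by rw [rel_ab]
  _ = Cq * (Bq * Dq) * (Cq * (Aq * Aq)) := by group
  _ = Cq * (Cq * Bq) * (Cq * (Aq * Aq)) := by rw [rel_bd]
  _ = Cq * Cq * (Bq * Cq) * (Aq * Aq) := by group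
  _ = Cq * Cq * (Aq * Bq) * (Aq * Aq) := by rw [rel_bc]
  _ = Cq * Cq * (Cq * Aq) * (Aq * Aq) := by rw [rel_ab]
  _ = (Cq * (Cq * Cq)) * (Aq * (Aq * Aq)) := by group
  _ = 1 := by rw [cubeA, cubeC]; group

lemma H1 : iQ * (iQ * (iQ * iQ)) = 1 := by
  rw [show iQ * (iQ * (iQ * iQ)) = (iQ * iQ) * (iQ * iQ) by group, hii, hz2]

lemma hiji : jQ = iQ * (jQ * iQ) := by
  have key : iQ * (jQ * iQ) = jQ := by
    show Bq * Aq⁻¹ * (Cq * Aq⁻¹ * (Bq * Aq⁻¹)) = Cq * Aq⁻¹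
    calc Bq * Aq⁻¹ * (Cq * Aq⁻¹ * (Bq * Aq⁻¹))
        = Bq * (Aq⁻¹ * Cq * Aq) * ((Aq⁻¹ * Aq⁻¹) * Bq) * Aq⁻¹ := by group
    _ = Bq * Bq * (Aq * Bq) * Aq⁻¹ := by rw [iconj_ac, hA2]
    _ = Bq * Bq * (Cq * Aq) * Aq⁻¹ := by rw [rel_ab]
    _ = Bq * Bq * (Bq * Cq) * Aq⁻¹ := by rw [rel_ca]
    _ = (Bq * (Bq * Bq)) * (Cq * Aq⁻¹) := by group
    _ = Cq * Aq⁻¹ := by rw [cubeB]; group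
  exact key.symm

lemma hIinv : iQ * (iQ * iQ) = iQ⁻¹ := (inv_eq_of_mul_eq_one_right H1).symm

lemma H3 : iQ * jQ = jQ * (iQ * (iQ * iQ)) := by
  calc iQ * jQ = (iQ * (jQ * iQ)) * iQ⁻¹ := by group
  _ = jQ * iQ⁻¹ := by rw [← hiji]
  _ = jQ * (iQ * (iQ * iQ)) := by rw [hIinv]

/-! ### simp versions of the rewrite rules -/

lemma HAx (x : QT) : Aq * (Aq * (Aq * x)) = x := by
  rw [show Aq * (Aq * (Aq * x)) = (Aq * (Aq * Aq)) * x by group, cubeA, one_mul]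
lemma H4x (x : QT) : Aq * (iQ * x) = jQ * (Aq * x) := by
  rw [← mul_assoc, H4]; group
lemma H5x (x : QT) : Aq * (jQ * x) = jQ * (iQ * (Aq * x)) := by
  rw [← mul_assoc, H5]; group
lemma H3x (x : QT) : iQ * (jQ * x) = jQ * (iQ * (iQ * (iQ * x))) := by
  rw [← mul_assoc, H3]; group
lemma H1x (x : QT) : iQ * (iQ * (iQ * (iQ * x))) = x := by
  rw [show iQ * (iQ * (iQ * (iQ * x))) = (iQ * (iQ * (iQ * iQ))) * x by group, H1, one_mul]
lemma H2x (x : QT) : jQ * (jQ * x) = iQ * (iQ * x) := by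
  rw [← mul_assoc, H2]; group


/-! ### Word normal forms -/

def w3 : ℕ → ℕ → ℕ → QT := fun p q r => jQ ^ p * (iQ ^ q * Aq ^ r)

lemma pw2 (x : QT) : x ^ (2:ℕ) = x * x := by rw [pow_succ, pow_one]
lemma pw3 (x : QT) : x ^ (3:ℕ) = x * (x * x) := by rw [pow_succ, pow_succ, pow_one, mul_assoc]

lemma LA000 : Aq * w3 0 0 0 = w3 0 0 1 := by
  simp only [w3, pow_zero, pow_one, pw2, pw3, one_mul, mul_one, mul_assoc,
    HB, HAx, H4x, H5x, H3x, H1x, H2x, H4, H5, H3, cubeA, H1, H2]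
lemma LA001 : Aq * w3 0 0 1 = w3 0 0 2 := by
  simp only [w3, pow_zero, pow_one, pw2, pw3, one_mul, mul_one, mul_assoc,
    HB, HAx, H4x, H5x, H3x, H1x, H2x, H4, H5, H3, cubeA, H1, H2]
lemma LA002 : Aq * w3 0 0 2 = w3 0 0 0 := by
  simp only [w3, pow_zero, pow_one, pw2, pw3, one_mul, mul_one, mul_assoc,
    HB, HAx, H4x, H5x, H3x, H1x, H2x, H4, H5, H3, cubeA, H1, H2]
lemma LA010 : Aq * w3 0 1 0 = w3 1 0 1 := by
  simp only [w3, pow_zero, pow_one, pw2, pw3, one_mul, mul_one, mul_assoc,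
    HB, HAx, H4x, H5x, H3x, H1x, H2x, H4, H5, H3, cubeA, H1, H2]
lemma LA011 : Aq * w3 0 1 1 = w3 1 0 2 := by
  simp only [w3, pow_zero, pow_one, pw2, pw3, one_mul, mul_one, mul_assoc,
    HB, HAx, H4x, H5x, H3x, H1x, H2x, H4, H5, H3, cubeA, H1, H2]
lemma LA012 : Aq * w3 0 1 2 = w3 1 0 0 := by
  simp only [w3, pow_zero, pow_one, pw2, pw3, one_mul, mul_one, mul_assoc,
    HB, HAx, H4x, H5x, H3x, H1x, H2x, H4, H5, H3, cubeA, H1, H2]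
lemma LA020 : Aq * w3 0 2 0 = w3 0 2 1 := by
  simp only [w3, pow_zero, pow_one, pw2, pw3, one_mul, mul_one, mul_assoc,
    HB, HAx, H4x, H5x, H3x, H1x, H2x, H4, H5, H3, cubeA, H1, H2]
lemma LA021 : Aq * w3 0 2 1 = w3 0 2 2 := by
  simp only [w3, pow_zero, pow_one, pw2, pw3, one_mul, mul_one, mul_assoc,
    HB, HAx, H4x, H5x, H3x, H1x, H2x, H4, H5, H3, cubeA, H1, H2]
lemma LA022 : Aq * w3 0 2 2 = w3 0 2 0 := by
  simp only [w3, pow_zero, pow_one, pw2, pw3, one_mul, mul_one, mul_assoc,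
    HB, HAx, H4x, H5x, H3x, H1x, H2x, H4, H5, H3, cubeA, H1, H2]
lemma LA030 : Aq * w3 0 3 0 = w3 1 2 1 := by
  simp only [w3, pow_zero, pow_one, pw2, pw3, one_mul, mul_one, mul_assoc,
    HB, HAx, H4x, H5x, H3x, H1x, H2x, H4, H5, H3, cubeA, H1, H2]
lemma LA031 : Aq * w3 0 3 1 = w3 1 2 2 := by
  simp only [w3, pow_zero, pow_one, pw2, pw3, one_mul, mul_one, mul_assoc,
    HB, HAx, H4x, H5x, H3x, H1x, H2x, H4, H5, H3, cubeA, H1, H2]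
lemma LA032 : Aq * w3 0 3 2 = w3 1 2 0 := by
  simp only [w3, pow_zero, pow_one, pw2, pw3, one_mul, mul_one, mul_assoc,
    HB, HAx, H4x, H5x, H3x, H1x, H2x, H4, H5, H3, cubeA, H1, H2]
lemma LA100 : Aq * w3 1 0 0 = w3 1 1 1 := by
  simp only [w3, pow_zero, pow_one, pw2, pw3, one_mul, mul_one, mul_assoc,
    HB, HAx, H4x, H5x, H3x, H1x, H2x, H4, H5, H3, cubeA, H1, H2]
lemma LA101 : Aq * w3 1 0 1 = w3 1 1 2 := by
  simp only [w3, pow_zero, pow_one, pw2, pw3, one_mul, mul_one, mul_assoc,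
    HB, HAx, H4x, H5x, H3x, H1x, H2x, H4, H5, H3, cubeA, H1, H2]
lemma LA102 : Aq * w3 1 0 2 = w3 1 1 0 := by
  simp only [w3, pow_zero, pow_one, pw2, pw3, one_mul, mul_one, mul_assoc,
    HB, HAx, H4x, H5x, H3x, H1x, H2x, H4, H5, H3, cubeA, H1, H2]
lemma LA110 : Aq * w3 1 1 0 = w3 0 1 1 := by
  simp only [w3, pow_zero, pow_one, pw2, pw3, one_mul, mul_one, mul_assoc,
    HB, HAx, H4x, H5x, H3x, H1x, H2x, H4, H5, H3, cubeA, H1, H2]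
lemma LA111 : Aq * w3 1 1 1 = w3 0 1 2 := by
  simp only [w3, pow_zero, pow_one, pw2, pw3, one_mul, mul_one, mul_assoc,
    HB, HAx, H4x, H5x, H3x, H1x, H2x, H4, H5, H3, cubeA, H1, H2]
lemma LA112 : Aq * w3 1 1 2 = w3 0 1 0 := by
  simp only [w3, pow_zero, pow_one, pw2, pw3, one_mul, mul_one, mul_assoc,
    HB, HAx, H4x, H5x, H3x, H1x, H2x, H4, H5, H3, cubeA, H1, H2]
lemma LA120 : Aq * w3 1 2 0 = w3 1 3 1 := by
  simp only [w3, pow_zero, pow_one, pw2, pw3, one_mul, mul_one, mul_assoc,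
    HB, HAx, H4x, H5x, H3x, H1x, H2x, H4, H5, H3, cubeA, H1, H2]
lemma LA121 : Aq * w3 1 2 1 = w3 1 3 2 := by
  simp only [w3, pow_zero, pow_one, pw2, pw3, one_mul, mul_one, mul_assoc,
    HB, HAx, H4x, H5x, H3x, H1x, H2x, H4, H5, H3, cubeA, H1, H2]
lemma LA122 : Aq * w3 1 2 2 = w3 1 3 0 := by
  simp only [w3, pow_zero, pow_one, pw2, pw3, one_mul, mul_one, mul_assoc,
    HB, HAx, H4x, H5x, H3x, H1x, H2x, H4, H5, H3, cubeA, H1, H2]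
lemma LA130 : Aq * w3 1 3 0 = w3 0 3 1 := by
  simp only [w3, pow_zero, pow_one, pw2, pw3, one_mul, mul_one, mul_assoc,
    HB, HAx, H4x, H5x, H3x, H1x, H2x, H4, H5, H3, cubeA, H1, H2]
lemma LA131 : Aq * w3 1 3 1 = w3 0 3 2 := by
  simp only [w3, pow_zero, pow_one, pw2, pw3, one_mul, mul_one, mul_assoc,
    HB, HAx, H4x, H5x, H3x, H1x, H2x, H4, H5, H3, cubeA, H1, H2]
lemma LA132 : Aq * w3 1 3 2 = w3 0 3 0 := by
  simp only [w3, pow_zero, pow_one, pw2, pw3, one_mul, mul_one, mul_assoc,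
    HB, HAx, H4x, H5x, H3x, H1x, H2x, H4, H5, H3, cubeA, H1, H2]
lemma LB000 : Bq * w3 0 0 0 = w3 0 1 1 := by
  simp only [w3, pow_zero, pow_one, pw2, pw3, one_mul, mul_one, mul_assoc,
    HB, HAx, H4x, H5x, H3x, H1x, H2x, H4, H5, H3, cubeA, H1, H2]
lemma LB001 : Bq * w3 0 0 1 = w3 0 1 2 := by
  simp only [w3, pow_zero, pow_one, pw2, pw3, one_mul, mul_one, mul_assoc,
    HB, HAx, H4x, H5x, H3x, H1x, H2x, H4, H5, H3, cubeA, H1, H2]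
lemma LB002 : Bq * w3 0 0 2 = w3 0 1 0 := by
  simp only [w3, pow_zero, pow_one, pw2, pw3, one_mul, mul_one, mul_assoc,
    HB, HAx, H4x, H5x, H3x, H1x, H2x, H4, H5, H3, cubeA, H1, H2]
lemma LB010 : Bq * w3 0 1 0 = w3 1 3 1 := by
  simp only [w3, pow_zero, pow_one, pw2, pw3, one_mul, mul_one, mul_assoc,
    HB, HAx, H4x, H5x, H3x, H1x, H2x, H4, H5, H3, cubeA, H1, H2]
lemma LB011 : Bq * w3 0 1 1 = w3 1 3 2 := by
  simp only [w3, pow_zero, pow_one, pw2, pw3, one_mul, mul_one, mul_assoc,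
    HB, HAx, H4x, H5x, H3x, H1x, H2x, H4, H5, H3, cubeA, H1, H2]
lemma LB012 : Bq * w3 0 1 2 = w3 1 3 0 := by
  simp only [w3, pow_zero, pow_one, pw2, pw3, one_mul, mul_one, mul_assoc,
    HB, HAx, H4x, H5x, H3x, H1x, H2x, H4, H5, H3, cubeA, H1, H2]
lemma LB020 : Bq * w3 0 2 0 = w3 0 3 1 := by
  simp only [w3, pow_zero, pow_one, pw2, pw3, one_mul, mul_one, mul_assoc,
    HB, HAx, H4x, H5x, H3x, H1x, H2x, H4, H5, H3, cubeA, H1, H2]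
lemma LB021 : Bq * w3 0 2 1 = w3 0 3 2 := by
  simp only [w3, pow_zero, pow_one, pw2, pw3, one_mul, mul_one, mul_assoc,
    HB, HAx, H4x, H5x, H3x, H1x, H2x, H4, H5, H3, cubeA, H1, H2]
lemma LB022 : Bq * w3 0 2 2 = w3 0 3 0 := by
  simp only [w3, pow_zero, pow_one, pw2, pw3, one_mul, mul_one, mul_assoc,
    HB, HAx, H4x, H5x, H3x, H1x, H2x, H4, H5, H3, cubeA, H1, H2]
lemma LB030 : Bq * w3 0 3 0 = w3 1 1 1 := by
  simp only [w3, pow_zero, pow_one, pw2, pw3, one_mul, mul_one, mul_assoc,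
    HB, HAx, H4x, H5x, H3x, H1x, H2x, H4, H5, H3, cubeA, H1, H2]
lemma LB031 : Bq * w3 0 3 1 = w3 1 1 2 := by
  simp only [w3, pow_zero, pow_one, pw2, pw3, one_mul, mul_one, mul_assoc,
    HB, HAx, H4x, H5x, H3x, H1x, H2x, H4, H5, H3, cubeA, H1, H2]
lemma LB032 : Bq * w3 0 3 2 = w3 1 1 0 := by
  simp only [w3, pow_zero, pow_one, pw2, pw3, one_mul, mul_one, mul_assoc,
    HB, HAx, H4x, H5x, H3x, H1x, H2x, H4, H5, H3, cubeA, H1, H2]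
lemma LB100 : Bq * w3 1 0 0 = w3 1 0 1 := by
  simp only [w3, pow_zero, pow_one, pw2, pw3, one_mul, mul_one, mul_assoc,
    HB, HAx, H4x, H5x, H3x, H1x, H2x, H4, H5, H3, cubeA, H1, H2]
lemma LB101 : Bq * w3 1 0 1 = w3 1 0 2 := by
  simp only [w3, pow_zero, pow_one, pw2, pw3, one_mul, mul_one, mul_assoc,
    HB, HAx, H4x, H5x, H3x, H1x, H2x, H4, H5, H3, cubeA, H1, H2]
lemma LB102 : Bq * w3 1 0 2 = w3 1 0 0 := by
  simp only [w3, pow_zero, pow_one, pw2, pw3, one_mul, mul_one, mul_assoc,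
    HB, HAx, H4x, H5x, H3x, H1x, H2x, H4, H5, H3, cubeA, H1, H2]
lemma LB110 : Bq * w3 1 1 0 = w3 0 2 1 := by
  simp only [w3, pow_zero, pow_one, pw2, pw3, one_mul, mul_one, mul_assoc,
    HB, HAx, H4x, H5x, H3x, H1x, H2x, H4, H5, H3, cubeA, H1, H2]
lemma LB111 : Bq * w3 1 1 1 = w3 0 2 2 := by
  simp only [w3, pow_zero, pow_one, pw2, pw3, one_mul, mul_one, mul_assoc,
    HB, HAx, H4x, H5x, H3x, H1x, H2x, H4, H5, H3, cubeA, H1, H2]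
lemma LB112 : Bq * w3 1 1 2 = w3 0 2 0 := by
  simp only [w3, pow_zero, pow_one, pw2, pw3, one_mul, mul_one, mul_assoc,
    HB, HAx, H4x, H5x, H3x, H1x, H2x, H4, H5, H3, cubeA, H1, H2]
lemma LB120 : Bq * w3 1 2 0 = w3 1 2 1 := by
  simp only [w3, pow_zero, pow_one, pw2, pw3, one_mul, mul_one, mul_assoc,
    HB, HAx, H4x, H5x, H3x, H1x, H2x, H4, H5, H3, cubeA, H1, H2]
lemma LB121 : Bq * w3 1 2 1 = w3 1 2 2 := by
  simp only [w3, pow_zero, pow_one, pw2, pw3, one_mul, mul_one, mul_assoc,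
    HB, HAx, H4x, H5x, H3x, H1x, H2x, H4, H5, H3, cubeA, H1, H2]
lemma LB122 : Bq * w3 1 2 2 = w3 1 2 0 := by
  simp only [w3, pow_zero, pow_one, pw2, pw3, one_mul, mul_one, mul_assoc,
    HB, HAx, H4x, H5x, H3x, H1x, H2x, H4, H5, H3, cubeA, H1, H2]
lemma LB130 : Bq * w3 1 3 0 = w3 0 0 1 := by
  simp only [w3, pow_zero, pow_one, pw2, pw3, one_mul, mul_one, mul_assoc,
    HB, HAx, H4x, H5x, H3x, H1x, H2x, H4, H5, H3, cubeA, H1, H2]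
lemma LB131 : Bq * w3 1 3 1 = w3 0 0 2 := by
  simp only [w3, pow_zero, pow_one, pw2, pw3, one_mul, mul_one, mul_assoc,
    HB, HAx, H4x, H5x, H3x, H1x, H2x, H4, H5, H3, cubeA, H1, H2]
lemma LB132 : Bq * w3 1 3 2 = w3 0 0 0 := by
  simp only [w3, pow_zero, pow_one, pw2, pw3, one_mul, mul_one, mul_assoc,
    HB, HAx, H4x, H5x, H3x, H1x, H2x, H4, H5, H3, cubeA, H1, H2]


def ι : Fin 2 × Fin 4 × Fin 3 → QT := fun t => w3 t.1 t.2.1 t.2.2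

lemma hA : ∀ t : Fin 2 × Fin 4 × Fin 3, ∃ t', ι t' = Aq * ι t := by
  rintro ⟨δ, α, e⟩
  fin_cases δ <;> fin_cases α <;> fin_cases e <;>
    first | exact ⟨(0,0,1), (LA000).symm⟩ | exact ⟨(0,0,2), (LA001).symm⟩ | exact ⟨(0,0,0), (LA002).symm⟩ | exact ⟨(1,0,1), (LA010).symm⟩ | exact ⟨(1,0,2), (LA011).symm⟩ | exact ⟨(1,0,0), (LA012).symm⟩ | exact ⟨(0,2,1), (LA020).symm⟩ | exact ⟨(0,2,2), (LA021).symm⟩ | exact ⟨(0,2,0), (LA022).symm⟩ | exact ⟨(1,2,1), (LA030).symm⟩ | exact ⟨(1,2,2), (LA031).symm⟩ | exact ⟨(1,2,0), (LA032).symm⟩ | exact ⟨(1,1,1), (LA100).symm⟩ | exact ⟨(1,1,2), (LA101).symm⟩ | exact ⟨(1,1,0), (LA102).symm⟩ | exact ⟨(0,1,1), (LA110).symm⟩ | exact ⟨(0,1,2), (LA111).symm⟩ | exact ⟨(0,1,0), (LA112).symm⟩ | exact ⟨(1,3,1), (LA120).symm⟩ | exact ⟨(1,3,2), (LA121).symm⟩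 | exact ⟨(1,3,0), (LA122).symm⟩ | exact ⟨(0,3,1), (LA130).symm⟩ | exact ⟨(0,3,2), (LA131).symm⟩ | exact ⟨(0,3,0), (LA132).symm⟩

lemma hB : ∀ t : Fin 2 × Fin 4 × Fin 3, ∃ t', ι t' = Bq * ι t := by
  rintro ⟨δ, α, e⟩
  fin_cases δ <;> fin_cases α <;> fin_cases e <;>
    first | exact ⟨(0,1,1), (LB000).symm⟩ | exact ⟨(0,1,2), (LB001).symm⟩ | exact ⟨(0,1,0), (LB002).symm⟩ | exact ⟨(1,3,1), (LB010).symm⟩ | exact ⟨(1,3,2), (LB011).symm⟩ | exact ⟨(1,3,0), (LB012).symm⟩ | exact ⟨(0,3,1), (LB020).symm⟩ | exact ⟨(0,3,2), (LB021).symm⟩ | exact ⟨(0,3,0), (LB022).symm⟩ | exact ⟨(1,1,1), (LB030).symm⟩ | exact ⟨(1,1,2), (LB031).symm⟩ | exact ⟨(1,1,0), (LB032).symm⟩ | exact ⟨(1,0,1), (LB100).symm⟩ | exact ⟨(1,0,2), (LB101).symm⟩ | exact ⟨(1,0,0), (LB102).symm⟩ | exact ⟨(0,2,1), (LB110).symm⟩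 | exact ⟨(0,2,2), (LB111).symm⟩ | exact ⟨(0,2,0), (LB112).symm⟩ | exact ⟨(1,2,1), (LB120).symm⟩ | exact ⟨(1,2,2), (LB121).symm⟩ | exact ⟨(1,2,0), (LB122).symm⟩ | exact ⟨(0,0,1), (LB130).symm⟩ | exact ⟨(0,0,2), (LB131).symm⟩ | exact ⟨(0,0,0), (LB132).symm⟩

lemma iota_zero : ι (0,0,0) = 1 := by
  show w3 0 0 0 = 1
  simp only [w3, pow_zero, one_mul]


/-! ### Generation of the quotient group -/

lemma envel_gen (z : Rack.EnvelGroup T) :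
    z ∈ Subgroup.closure (Set.range (fun x : T => Rack.toEnvelGroup T x)) := by
  induction z using Quotient.inductionOn with
  | h w =>
    induction w with
    | unit => exact one_mem _
    | incl x => exact Subgroup.subset_closure ⟨x, rfl⟩
    | mul a b iha ihb => exact mul_mem iha ihb
    | inv a iha => exact inv_mem iha

lemma Q_gen (q : QT) : q ∈ Subgroup.closure {Aq, Bq} := by
  obtain ⟨z, rfl⟩ := QuotientGroup.mk'_surjective NT q
  refine Subgroup.closure_induction
    (p := fun g _ => π g ∈ Subgroup.closure {Aq, Bq}) ?_ ?_ ?_ ?_ (envel_gen z)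
  · rintro g ⟨t, rfl⟩
    have hAmem : Aq ∈ Subgroup.closure {Aq, Bq} :=
      Subgroup.subset_closure (Set.mem_insert _ _)
    have hBmem : Bq ∈ Subgroup.closure {Aq, Bq} :=
      Subgroup.subset_closure (Set.mem_insert_of_mem _ rfl)
    rcases T_classify t with h | h | h | h <;> subst h
    · exact hAmem
    · exact hBmem
    · have hc : Aq * Bq * Aq⁻¹ ∈ Subgroup.closure {Aq, Bq} :=
        mul_mem (mul_mem hAmem hBmem) (inv_mem hAmem)
      rw [conj_ab] at hc
      exact hc
    · have hd : Bq * Aq * Bq⁻¹ ∈ Subgroup.closure {Aq, Bq} :=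
        mul_mem (mul_mem hBmem hAmem) (inv_mem hBmem)
      rw [conj_ba] at hd
      exact hd
  · simpa using one_mem _
  · intro g h _ _ hg hh
    rw [map_mul]; exact mul_mem hg hh
  · intro g _ hg
    rw [map_inv]; exact inv_mem hg

/-! ### Surjectivity of the word map -/

def MM (q : QT) : Prop := ∀ t, ∃ t', ι t' = q * ι t

lemma MM_one : MM 1 := fun t => ⟨t, by rw [one_mul]⟩

lemma MM_mul {q₁ q₂ : QT} (h₁ : MM q₁) (h₂ : MM q₂) : MM (q₁ * q₂) := by
  intro t
  obtain ⟨t₂, ht₂⟩ := h₂ t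
  obtain ⟨t₁, ht₁⟩ := h₁ t₂
  exact ⟨t₁, by rw [ht₁, ht₂, mul_assoc]⟩

lemma MM_A : MM Aq := hA
lemma MM_B : MM Bq := hB

lemma MM_Ainv : MM Aq⁻¹ := by
  have h : MM (Aq * Aq) := MM_mul MM_A MM_A
  rwa [← hAinv] at h

lemma MM_Binv : MM Bq⁻¹ := by
  have h : MM (Bq * Bq) := MM_mul MM_B MM_B
  rwa [← hBinv] at h

lemma MM_all (q : QT) : MM q := by
  have key : ∀ g ∈ Subgroup.closure {Aq, Bq}, MM g ∧ MM g⁻¹ := by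
    intro g hg
    refine Subgroup.closure_induction (p := fun g _ => MM g ∧ MM g⁻¹) ?_ ?_ ?_ ?_ hg
    · rintro x (rfl | rfl)
      · exact ⟨MM_A, MM_Ainv⟩
      · exact ⟨MM_B, MM_Binv⟩
    · exact ⟨MM_one, by rw [inv_one]; exact MM_one⟩
    · rintro x y _ _ ⟨hx, hxi⟩ ⟨hy, hyi⟩
      exact ⟨MM_mul hx hy, by rw [mul_inv_rev]; exact MM_mul hyi hxi⟩
    · rintro x _ ⟨hx, hxi⟩
      exact ⟨hxi, by rw [inv_inv]; exact hx⟩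
  exact (key q (Q_gen q)).1

lemma iota_surj : Function.Surjective ι := by
  intro q
  obtain ⟨t', ht'⟩ := MM_all q (0,0,0)
  exact ⟨t', by rw [ht', iota_zero, mul_one]⟩

/-! ### The homomorphism to SL(2,3) -/

def Ma : SL := ⟨!![1,0;2,1], by decide⟩
def Mb : SL := ⟨!![0,1;2,2], by decide⟩
def Mc : SL := ⟨!![1,1;0,1], by decide⟩
def Md : SL := ⟨!![2,1;2,0], by decide⟩

def FT : T → SL := fun x =>
  if x.1 = va then Ma else if x.1 = vb then Mb else if x.1 = vc then Mc else Md

lemma FT_act : ∀ x y : T, FT (x ◃ y) = FT x * FT y * (FT x)⁻¹ := by decide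
lemma FT_cube : ∀ x : T, FT x ^ 3 = 1 := by decide

def fsh : T →◃ Quandle.Conj SL where
  toFun := FT
  map_act' := @fun x y => FT_act x y

def φ : Rack.EnvelGroup T →* SL := Rack.toEnvelGroup.map fsh

lemma hφe (x : T) : φ (eT x) = FT x := rfl

lemma hker : NT ≤ φ.ker := by
  refine Subgroup.normalClosure_le_normal ?_
  rintro w ⟨x, rfl⟩
  have h1 : φ ((Rack.toEnvelGroup T x) ^ 3) = 1 := by
    rw [map_pow, show φ (Rack.toEnvelGroup T x) = FT x from rfl, FT_cube]
  exact h1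

def φ' : QT →* SL := QuotientGroup.lift NT φ hker

lemma hφ'π (z : Rack.EnvelGroup T) : φ' (π z) = φ z := rfl

lemma hφA : φ' Aq = Ma := by
  have h : φ' Aq = FT ta := rfl
  rw [h]; decide
lemma hφB : φ' Bq = Mb := by
  have h : φ' Bq = FT tb := rfl
  rw [h]; decide
lemma hφC : φ' Cq = Mc := by
  have h : φ' Cq = FT tc := rfl
  rw [h]; decide

def Ni : SL := Mb * Ma⁻¹
def Nj : SL := Mc * Ma⁻¹

def gD : Fin 2 × Fin 4 × Fin 3 → SL := fun t =>
  Nj ^ (t.1 : ℕ) * (Ni ^ (t.2.1 : ℕ) * Ma ^ (t.2.2 : ℕ))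

lemma gD_inj : Function.Injective gD := by decide
lemma gD_surj : Function.Surjective gD := by decide

lemma hφi : φ' iQ = Ni := by
  show φ' (Bq * Aq⁻¹) = Ni
  rw [map_mul, map_inv, hφA, hφB]; rfl
lemma hφj : φ' jQ = Nj := by
  show φ' (Cq * Aq⁻¹) = Nj
  rw [map_mul, map_inv, hφA, hφC]; rfl

lemma compat (t : Fin 2 × Fin 4 × Fin 3) : φ' (ι t) = gD t := by
  show φ' (jQ ^ (t.1:ℕ) * (iQ ^ (t.2.1:ℕ) * Aq ^ (t.2.2:ℕ))) = _
  rw [map_mul, map_mul, map_pow, map_pow, map_pow, hφA, hφi, hφj]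
  rfl

lemma φ'_surj : Function.Surjective φ' := by
  intro m
  obtain ⟨t, ht⟩ := gD_surj m
  exact ⟨ι t, by rw [compat, ht]⟩

noncomputable instance : Fintype QT :=
  haveI : Finite QT := Finite.of_surjective ι iota_surj
  Fintype.ofFinite _

lemma φ'_bij : Function.Bijective φ' := by
  refine (Fintype.bijective_iff_surjective_and_card φ').2 ⟨φ'_surj, ?_⟩
  have c1 : Fintype.card QT ≤ Fintype.card (Fin 2 × Fin 4 × Fin 3) :=
    Fintype.card_le_of_surjective ι iota_surj
  have c2 : Fintype.card (Fin 2 × Fin 4 × Fin 3) ≤ Fintype.card SL :=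
    Fintype.card_le_of_injective gD gD_inj
  have c3 : Fintype.card SL ≤ Fintype.card QT :=
    Fintype.card_le_of_surjective φ' φ'_surj
  omega

noncomputable def theEquiv : QT ≃* SL := MulEquiv.ofBijective φ' φ'_bij

/-! ### Part 1: every `φₓ` has order 3 -/

lemma cube_c123 : c123 ^ 3 = 1 := by decide

lemma cube_T (x : T) : (x : A4) ^ 3 = 1 := by
  obtain ⟨h, hh⟩ := x.2
  rw [← hh]
  have hc : c123 ^ 3 = 1 := cube_c123
  calc (h * c123 * h⁻¹) ^ 3 = h * c123 ^ 3 * h⁻¹ := by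
        rw [pow_succ, pow_succ, pow_one, pow_succ, pow_succ, pow_one]; group
  _ = 1 := by rw [hc]; group

lemma orderOf_act' (x : T) : orderOf (Rack.act' x) = 3 := by
  haveI : Fact (Nat.Prime 3) := ⟨by norm_num⟩
  obtain ⟨h, hh⟩ := x.2
  refine orderOf_eq_prime ?_ ?_
  · refine Equiv.ext fun y => ?_
    have hap : (Rack.act' x ^ 3) y = Rack.act' x (Rack.act' x (Rack.act' x y)) := by
      rw [pow_succ, pow_succ, pow_one]; rfl
    rw [hap, show (1 : ↥T ≃ ↥T) y = y from rfl]
    apply Subtype.ext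
    show (x : A4) * ((x : A4) * ((x : A4) * y * (x : A4)⁻¹) * (x : A4)⁻¹) * (x : A4)⁻¹ = y
    have hx3 := cube_T x
    rw [pow_succ, pow_succ, pow_one] at hx3
    calc (x : A4) * ((x : A4) * ((x : A4) * y * (x : A4)⁻¹) * (x : A4)⁻¹) * (x : A4)⁻¹
        = ((x : A4) * (x : A4) * (x : A4)) * y * ((x : A4) * (x : A4) * (x : A4))⁻¹ := by group
    _ = y := by rw [hx3]; group
  · intro heq
    set y : T := ⟨h * vb * h⁻¹, conj_mem_T h tb.2⟩ with hy
    have h1 : x ◃ y = y := by rw [Equiv.ext_iff] at heq; simpa using heq y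
    have h2 : (x : A4) * (h * vb * h⁻¹) * (x : A4)⁻¹ = h * vb * h⁻¹ :=
      Subtype.ext_iff.1 h1
    have h3 : h * (c123 * vb * c123⁻¹) * h⁻¹ = h * vb * h⁻¹ := by
      calc h * (c123 * vb * c123⁻¹) * h⁻¹
          = (h * c123 * h⁻¹) * (h * vb * h⁻¹) * (h * c123 * h⁻¹)⁻¹ := by group
      _ = h * vb * h⁻¹ := by rw [hh]; exact h2
    have h4 : c123 * vb * c123⁻¹ = vb := mul_left_cancel (mul_right_cancel h3)
    exact absurd h4 (by decide)

end Stmt11Aux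

/-- Every permutation `φₓ` of the tetrahedron quandle `T` has order `3`, and the
finite enveloping group of `T`, i.e. the quotient of the enveloping group `G_T`
by the normal subgroup generated by the cubes `x³` of the generators `x ∈ T`,
is isomorphic to `SL(2, 3)`. -/
theorem stmt11 :
    (∀ x : T, orderOf (Rack.act' x) = 3) ∧
    Nonempty ((Rack.EnvelGroup T ⧸ Subgroup.normalClosure
        {w : Rack.EnvelGroup T | ∃ x : T, w = (Rack.toEnvelGroup T x) ^ 3}) ≃*
      Matrix.SpecialLinearGroup (Fin 2) (ZMod 3)) :=
  ⟨Stmt11Aux.orderOf_act', ⟨Stmt11Aux.theEquiv⟩⟩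
end
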